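/- Let R be a Dedekind domain which is not a field, and let K be its fraction field. Then the canonical K-algebra homomorphism K ⊗_R (∏_v O_v) → 𝔸_{R,K}, induced by the diagonal embedding K → 𝔸_{R,K} and the inclusion ∏_v O_v → 𝔸_{R,K} of the full product of integer rings (where v ranges over the height-one primes of R), is an isomorphism. (This is the one-dimensional affine instance of the isomorphism A(n) ⊗_𝒪 A(i_0,…,i_r) ≅ A(n,i_0,…,i_r) of Beilinson adele rings: here A(1) = K, A(0) = ∏_v O_v, and A(01) = 𝔸_{R,K}.) -/

import Mathlib

open IsDedekindDomain

namespace DedekindDomain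

/-- The product of all `adicCompletionIntegers`, where `v` runs over the maximal ideals of `R`
(the definition `DedekindDomain.FiniteIntegralAdeles` of older Mathlib). -/
def FiniteIntegralAdeles (R K : Type*) [CommRing R] [IsDedekindDomain R] [Field K]
    [Algebra R K] [IsFractionRing R K] : Type _ :=
  ∀ v : HeightOneSpectrum R, v.adicCompletionIntegers K

noncomputable instance (R K : Type*) [CommRing R] [IsDedekindDomain R] [Field K]
    [Algebra R K] [IsFractionRing R K] : CommRing (FiniteIntegralAdeles R K) :=
  Pi.commRing

noncomputable instance (R K : Type*) [CommRing R] [IsDedekindDomain R] [Field K]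
    [Algebra R K] [IsFractionRing R K] : Algebra R (FiniteIntegralAdeles R K) :=
  Pi.algebra _ _

/-- The inclusion of the integral adeles into the finite adele ring. -/
noncomputable instance (R K : Type*) [CommRing R] [IsDedekindDomain R] [Field K]
    [Algebra R K] [IsFractionRing R K] :
    Algebra (FiniteIntegralAdeles R K) (FiniteAdeleRing R K) :=
  RingHom.toAlgebra
    { toFun := fun x => RestrictedProduct.structureMap _ _ _ x
      map_one' := rfl
      map_mul' := fun _ _ => rfl
      map_zero' := rfl
      map_add' := fun _ _ => rfl }

end DedekindDomain

open DedekindDomain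

/-- The inclusion `∏_v O_v → 𝔸_{R,K}` of the full product of the rings of integral adeles
into the finite adele ring, as a homomorphism of `R`-algebras. -/
noncomputable def finiteIntegralAdelesInclusion
    (R K : Type*) [CommRing R] [IsDedekindDomain R] [Field K] [Algebra R K]
    [IsFractionRing R K] : FiniteIntegralAdeles R K →ₐ[R] FiniteAdeleRing R K :=
  { algebraMap (FiniteIntegralAdeles R K) (FiniteAdeleRing R K) with
    commutes' := fun _ => rfl }

open scoped TensorProduct nonZeroDivisors

/-- Every element of `K ⊗[R] M` can be cleared of denominators. -/
lemma tensor_denom_clear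
    (R K : Type*) [CommRing R] [IsDomain R] [Field K] [Algebra R K]
    [IsFractionRing R K] (M : Type*) [AddCommGroup M] [Module R M]
    (x : K ⊗[R] M) : ∃ (b : R⁰) (m : M), (b : R) • x = (1 : K) ⊗ₜ[R] m := by
  induction x using TensorProduct.induction_on with
  | zero => exact ⟨1, 0, by simp⟩
  | tmul k m =>
      obtain ⟨⟨r, s⟩, h⟩ := IsLocalization.surj R⁰ k
      refine ⟨s, r • m, ?_⟩
      rw [TensorProduct.smul_tmul']
      have hs : (s : R) • k = algebraMap R K r := by
        rw [Algebra.smul_def, mul_comm]; exact h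
      rw [hs, TensorProduct.tmul_smul, TensorProduct.smul_tmul']
      congr 1
      rw [Algebra.smul_def, mul_one]
  | add x y hx hy =>
      obtain ⟨b₁, m₁, h₁⟩ := hx
      obtain ⟨b₂, m₂, h₂⟩ := hy
      refine ⟨b₁ * b₂, (b₂ : R) • m₁ + (b₁ : R) • m₂, ?_⟩
      rw [TensorProduct.tmul_add, TensorProduct.tmul_smul, TensorProduct.tmul_smul,
        ← h₁, ← h₂]
      simp only [Submonoid.coe_mul, mul_smul, smul_add]
      rw [smul_comm ((b₁ : R)) ((b₂ : R)) x]

lemma FiniteAdeleRing.mul_nonZeroDivisor_mem_finiteIntegralAdeles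
    {R K : Type*} [CommRing R] [IsDedekindDomain R] [Field K] [Algebra R K]
    [IsFractionRing R K] (a : FiniteAdeleRing R K) :
    ∃ (b : R⁰) (c : FiniteIntegralAdeles R K),
      a * algebraMap R (FiniteAdeleRing R K) (b : R)
        = algebraMap (FiniteIntegralAdeles R K) (FiniteAdeleRing R K) c := by
  classical
  have hfin : {v : HeightOneSpectrum R | a v ∉ v.adicCompletionIntegers K}.Finite :=
    Filter.eventually_cofinite.mp a.2
  choose b hb h using fun v : HeightOneSpectrum R =>
    HeightOneSpectrum.adicCompletion.mul_nonZeroDivisor_mem_adicCompletionIntegers (K := K) v (a v)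
  let p := ∏ v ∈ hfin.toFinset, b v
  have hp : p ∈ R⁰ := prod_mem fun v _ => hb v
  have hint : ∀ v : HeightOneSpectrum R, ∀ r : R,
      algebraMap R (v.adicCompletion K) r ∈ v.adicCompletionIntegers K := fun v r =>
    (algebraMap R (v.adicCompletionIntegers K) r).2
  refine ⟨⟨p, hp⟩, fun v => ⟨a v * algebraMap R (v.adicCompletion K) p, ?_⟩, ?_⟩
  · by_cases hv : v ∈ hfin.toFinset
    · rw [show p = b v * ∏ w ∈ hfin.toFinset.erase v, b w from
        (Finset.mul_prod_erase _ _ hv).symm, map_mul, ← mul_assoc]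
      exact mul_mem (h v) (hint v _)
    · have hv' : a v ∈ v.adicCompletionIntegers K := by
        simpa [hfin.mem_toFinset] using hv
      exact mul_mem hv' (hint v p)
  · ext v; rfl



/-- Let `R` be a Dedekind domain which is not a field, with fraction field
`K`.  Then the canonical `K`-algebra homomorphism `K ⊗[R] (∏_v O_v) → 𝔸_{R,K}`, induced by
the diagonal embedding `K → 𝔸_{R,K}` and the inclusion `∏_v O_v → 𝔸_{R,K}` (where `v` runs
over the height-one primes of `R`), is an isomorphism. -/
theorem finiteAdeleRing_baseChange_bijective
    (R K : Type*) [CommRing R] [IsDedekindDomain R] (hRfield : ¬ IsField R)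
    [Field K] [Algebra R K] [IsFractionRing R K] :
    Function.Bijective
      (Algebra.TensorProduct.lift
        (Algebra.ofId K (FiniteAdeleRing R K))
        (finiteIntegralAdelesInclusion R K)
        (fun _ _ => Commute.all _ _)) := by
  set φ := Algebra.TensorProduct.lift
        (Algebra.ofId K (FiniteAdeleRing R K))
        (finiteIntegralAdelesInclusion R K)
        (fun _ _ => Commute.all _ _) with hφdef
  have hφ1 : ∀ (m : FiniteIntegralAdeles R K),
      φ ((1 : K) ⊗ₜ[R] m) = algebraMap (FiniteIntegralAdeles R K) (FiniteAdeleRing R K) m := by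
    intro m
    simp [hφdef, Algebra.TensorProduct.lift_tmul, finiteIntegralAdelesInclusion]
    rfl
  constructor
  · intro x y hxy
    rw [← sub_eq_zero] at hxy ⊢
    rw [← map_sub] at hxy
    set z := x - y
    obtain ⟨b, m, hm⟩ := @tensor_denom_clear R K _ _ _ _ _ (FiniteIntegralAdeles R K) _ Algebra.toModule z
    have hb : algebraMap R K (b : R) ≠ 0 :=
      (map_ne_zero_iff _ (IsFractionRing.injective R K)).2 (nonZeroDivisors.coe_ne_zero b)
    have hsmul : (b : R) • z = algebraMap R K (b : R) • z := (algebraMap_smul K _ _).symm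
    have h0 : φ ((b : R) • z) = 0 := by
      rw [hsmul, map_smul, hxy, smul_zero]
    rw [show (b : R) • z = (1 : K) ⊗ₜ[R] m from hm, hφ1] at h0
    have hK : ∀ v, (algebraMap (FiniteIntegralAdeles R K) (FiniteAdeleRing R K) m) v = 0 := by
      rw [h0]; intro v; rfl
    have hm0 : m = 0 := by
      funext v
      exact Subtype.ext (hK v)
    have hz0 : (b : R) • z = 0 := by rw [show (b : R) • z = (1 : K) ⊗ₜ[R] m from hm, hm0]; simp
    rw [hsmul] at hz0
    exact (smul_eq_zero_iff_eq (Units.mk0 _ hb)).mp hz0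
  · intro a
    obtain ⟨b, c, h⟩ := FiniteAdeleRing.mul_nonZeroDivisor_mem_finiteIntegralAdeles a
    have hb : algebraMap R K (b : R) ≠ 0 :=
      (map_ne_zero_iff _ (IsFractionRing.injective R K)).2 (nonZeroDivisors.coe_ne_zero b)
    refine ⟨(algebraMap R K (b : R))⁻¹ ⊗ₜ[R] c, ?_⟩
    have hval : φ ((algebraMap R K (b : R))⁻¹ ⊗ₜ[R] c)
        = algebraMap K (FiniteAdeleRing R K) (algebraMap R K (b : R))⁻¹
          * algebraMap (FiniteIntegralAdeles R K) (FiniteAdeleRing R K) c := by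
      simp [hφdef, Algebra.TensorProduct.lift_tmul, finiteIntegralAdelesInclusion,
        Algebra.ofId_apply]
      rfl
    have h' : algebraMap (FiniteIntegralAdeles R K) (FiniteAdeleRing R K) c
        = a * algebraMap R (FiniteAdeleRing R K) (b : R) := h.symm
    rw [hval, h']
    have hcast : algebraMap R (FiniteAdeleRing R K) (b : R)
        = algebraMap K (FiniteAdeleRing R K) (algebraMap R K (b : R)) := by
      rw [IsScalarTower.algebraMap_apply R K (FiniteAdeleRing R K)]
    rw [hcast, mul_comm, mul_assoc, ← map_mul, mul_inv_cancel₀ hb, map_one, mul_one]
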